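/- arXiv:math/0605331 — 2 statements merged into one kernel-verified Lean document; each statement's English description precedes it below -/
import Mathlib

section
/- Let T ∈ B(ℓ²(T)) and let T_[∅] be the operator defined by (T_[∅]f)(t) = Σ over nodes r in the same horocycle as t of (Tχ_r)(t)·f(r) (i.e., the 'block-diagonal' part of T with respect to horocycles). Then T_[∅] is a bounded operator, ‖T_[∅]‖ ≤ ‖T‖, and T_[∅] is a constant. -/
open scoped InnerProductSpace ENNReal
open ContinuousLinearMap (adjoint)

noncomputable section

namespace Multiscale

/-- A homogeneous tree of order `q` with a distinguished boundary point `∞`,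
encoded by the `q` primitive shift maps (the right action `t ↦ t·αⱼ`, giving the
`q` successors of a node) together with the parent map (the first step of the
unique path from a node towards the boundary point `∞`).  The axioms say:
the shifts are jointly injective, `t·αⱼ` has parent `t`, every node is a
successor of its parent, the parent map has no cycles (acyclicity of the tree)
and the paths from any two nodes to `∞` eventually merge (connectedness and the
choice of one common boundary point). -/
structure HomTree (q : ℕ) (T : Type) where
  shift : Fin q → T → T
  parent : T → T
  shift_inj : ∀ i j s t, shift i s = shift j t → i = j ∧ s = t
  parent_shift : ∀ j t, parent (shift j t) = t
  shift_parent : ∀ t, ∃ j, shift j (parent t) = t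
  acyclic : ∀ t n, parent^[n] t = t → n = 0
  connected : ∀ s t, ∃ m n, parent^[m] s = parent^[n] t

variable {q : ℕ} {T : Type} [DecidableEq T]

/-- The partial order `s ⪯ t` induced by the boundary point:
`dist(s, s ∧ t) ≤ dist(t, s ∧ t)`. -/
def HomTree.ple (S : HomTree q T) (s t : T) : Prop :=
  ∃ m n, m ≤ n ∧ S.parent^[m] s = S.parent^[n] t

/-- The horocycle equivalence `s ≍ t` : `dist(s, s ∧ t) = dist(t, s ∧ t)`. -/
def HomTree.horo (S : HomTree q T) (s t : T) : Prop :=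
  ∃ n, S.parent^[n] s = S.parent^[n] t

/-- The right action `t ↦ t·w` of a word `w ∈ F_q` on the tree. -/
def HomTree.act (S : HomTree q T) : List (Fin q) → T → T
  | [], t => t
  | i :: w, t => S.act w (S.shift i t)

/-- `ℓ²(T)`. -/
abbrev L2 (T : Type) : Type := lp (fun _ : T => ℂ) 2

/-- The operator on `ℓ²` associated with a word `w ∈ F_q`, built from the
operators of the primitive shifts: `(w f)(t) = f(t·w)`. -/
def wordOp {q : ℕ} {H : Type} [NormedAddCommGroup H] [NormedSpace ℂ H]
    (A : Fin q → (H →L[ℂ] H)) : List (Fin q) → (H →L[ℂ] H)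
  | [] => 1
  | i :: w => A i ∘L wordOp A w

/-- A bounded operator on `ℓ²(T)` is causal if whenever `f` vanishes on
`{t : t ⪯ s}` so does `Xf`. -/
def Causal (S : HomTree q T) (X : L2 T →L[ℂ] L2 T) : Prop :=
  ∀ s : T, ∀ f : L2 T, (∀ t, S.ple t s → f t = 0) → ∀ t, S.ple t s → X f t = 0

/-- A constant: both `X` and `X*` are causal. -/
def IsConst (S : HomTree q T) (X : L2 T →L[ℂ] L2 T) : Prop :=
  Causal S X ∧ Causal S (adjoint X)

/-- Diagonal with respect to the standard basis `χ_t`. -/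
def IsDiagonal (X : L2 T →L[ℂ] L2 T) : Prop :=
  ∀ t : T, ∃ a : ℂ, X (lp.single 2 t 1) = a • lp.single 2 t 1

/-- A pair of words of `F_q` is irreducible if it is not of the form
`(αᵢ v₁, αᵢ v₂)`. -/
def Irred {q : ℕ} (w₁ w₂ : List (Fin q)) : Prop :=
  ¬ ∃ (i : Fin q) (v₁ v₂ : List (Fin q)), w₁ = i :: v₁ ∧ w₂ = i :: v₂

/-- Membership in the Hilbert--Schmidt class: `trace (X*X) = Σ_t ‖X χ_t‖² < ∞`. -/
def HSSummable (X : L2 T →L[ℂ] L2 T) : Prop :=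
  Summable fun t : T => ‖X (lp.single 2 t 1)‖ ^ 2

/-- The Hilbert--Schmidt norm `‖X‖₂ = (trace (X*X))^{1/2}`. -/
def hsNorm (X : L2 T →L[ℂ] L2 T) : ℝ :=
  Real.sqrt (∑' t : T, ‖X (lp.single 2 t 1)‖ ^ 2)

/-- The Hilbert--Schmidt inner product `⟨X, Y⟩₂ = trace (Y* X)`
(linear in `X`, conjugate-linear in `Y`). -/
def hsInner (X Y : L2 T →L[ℂ] L2 T) : ℂ :=
  ∑' t : T, ⟪Y (lp.single 2 t 1), X (lp.single 2 t 1)⟫_ℂ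


section Aux

variable {q : ℕ} {T : Type} [DecidableEq T]

theorem HomTree.horo_refl (S : HomTree q T) (t : T) : S.horo t t := ⟨0, rfl⟩

theorem HomTree.horo_symm {S : HomTree q T} {s t : T} (h : S.horo s t) : S.horo t s := by
  obtain ⟨n, hn⟩ := h; exact ⟨n, hn.symm⟩

theorem HomTree.horo_trans {S : HomTree q T} {s t u : T} (h1 : S.horo s t) (h2 : S.horo t u) :
    S.horo s u := by
  obtain ⟨m, hm⟩ := h1; obtain ⟨n, hn⟩ := h2
  refine ⟨m + n, ?_⟩
  calc S.parent^[m + n] s = S.parent^[n] (S.parent^[m] s) := by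
        rw [add_comm, Function.iterate_add_apply]
    _ = S.parent^[n] (S.parent^[m] t) := by rw [hm]
    _ = S.parent^[m] (S.parent^[n] t) := by
        rw [← Function.iterate_add_apply, ← Function.iterate_add_apply, add_comm]
    _ = S.parent^[m] (S.parent^[n] u) := by rw [hn]
    _ = S.parent^[m + n] u := (Function.iterate_add_apply _ _ _ _).symm

theorem HomTree.horo_ple {S : HomTree q T} {r t s : T} (h : S.horo r t) (h2 : S.ple t s) :
    S.ple r s := by
  obtain ⟨k, hk⟩ := h; obtain ⟨m, n, hmn, he⟩ := h2
  refine ⟨m + k, n + k, by omega, ?_⟩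
  calc S.parent^[m + k] r = S.parent^[m] (S.parent^[k] r) := Function.iterate_add_apply _ _ _ _
    _ = S.parent^[m] (S.parent^[k] t) := by rw [hk]
    _ = S.parent^[k] (S.parent^[m] t) := by
        rw [← Function.iterate_add_apply, ← Function.iterate_add_apply, add_comm]
    _ = S.parent^[k] (S.parent^[n] s) := by rw [he]
    _ = S.parent^[n + k] s := by rw [← Function.iterate_add_apply, add_comm]

/-- The horocycle equivalence as a setoid. -/
def horoSetoid (S : HomTree q T) : Setoid T :=
  ⟨S.horo, ⟨fun t => S.horo_refl t, HomTree.horo_symm, HomTree.horo_trans⟩⟩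

theorem mask_memℓp (A : Set T) (f : L2 T) : Memℓp (A.indicator ⇑f) 2 := by
  apply memℓp_gen
  have hs : Summable fun t => ‖f t‖ ^ (2 : ℝ≥0∞).toReal :=
    (memℓp_gen_iff (by norm_num)).1 (lp.memℓp f)
  refine hs.of_nonneg_of_le (fun t => Real.rpow_nonneg (norm_nonneg _) _) (fun t => ?_)
  refine Real.rpow_le_rpow (norm_nonneg _) ?_ (by norm_num)
  by_cases h : t ∈ A
  · rw [Set.indicator_of_mem h]
  · rw [Set.indicator_of_notMem h]; simp

/-- Restriction of an `ℓ²` function to a set, as a linear map. -/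
def maskL (A : Set T) : L2 T →ₗ[ℂ] L2 T where
  toFun f := ⟨A.indicator ⇑f, mask_memℓp A f⟩
  map_add' f g := by
    ext t
    by_cases h : t ∈ A <;>
      (show A.indicator ⇑(f + g) t = A.indicator ⇑f t + A.indicator ⇑g t
       simp only [h, Set.indicator_of_mem, Set.indicator_of_notMem, not_false_eq_true]; simp)
  map_smul' c f := by
    ext t
    by_cases h : t ∈ A <;>
      simp [Set.indicator_apply, h, lp.coeFn_smul]

theorem maskL_apply (A : Set T) (f : L2 T) (t : T) :
    (maskL A f : L2 T) t = A.indicator ⇑f t := rfl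

end Aux
section Aux2
set_option linter.unusedSectionVars false

variable {q : ℕ} {T : Type} [DecidableEq T]

theorem summable_norm_sq (g : L2 T) : Summable fun t => ‖g t‖ ^ (2 : ℕ) := by
  have hs : Summable fun t => ‖g t‖ ^ (2 : ℝ≥0∞).toReal :=
    (memℓp_gen_iff (by norm_num)).1 (lp.memℓp g)
  convert hs using 2 with t
  rw [ENNReal.toReal_ofNat, ← Real.rpow_natCast]
  norm_num

theorem norm_sq_tsum (g : L2 T) :
    ∑' t, (‖g t‖₊ : ℝ≥0∞) ^ 2 = (‖g‖₊ : ℝ≥0∞) ^ 2 := by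
  have h := lp.norm_rpow_eq_tsum (p := 2) (by norm_num) g
  rw [ENNReal.toReal_ofNat] at h
  have h2 : ‖g‖ ^ (2 : ℕ) = ∑' t, ‖g t‖ ^ (2 : ℕ) := by
    have e : ∀ x : ℝ, 0 ≤ x → x ^ (2 : ℝ) = x ^ (2 : ℕ) := fun x hx => by
      rw [← Real.rpow_natCast]; norm_num
    rw [← e _ (norm_nonneg _), h]
    exact tsum_congr fun t => e _ (norm_nonneg _)
  have : ENNReal.ofReal (‖g‖ ^ (2 : ℕ)) = ENNReal.ofReal (∑' t, ‖g t‖ ^ (2 : ℕ)) := by rw [h2]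
  rw [ENNReal.ofReal_tsum_of_nonneg (fun t => by positivity) (summable_norm_sq g)] at this
  calc ∑' t, (‖g t‖₊ : ℝ≥0∞) ^ 2
      = ∑' t, ENNReal.ofReal (‖g t‖ ^ (2 : ℕ)) := by
        refine tsum_congr fun t => ?_
        rw [ENNReal.ofReal_pow (norm_nonneg _), ← coe_nnnorm, ENNReal.ofReal_coe_nnreal]
    _ = ENNReal.ofReal (‖g‖ ^ (2 : ℕ)) := this.symm
    _ = (‖g‖₊ : ℝ≥0∞) ^ 2 := by
        rw [ENNReal.ofReal_pow (norm_nonneg _), ← coe_nnnorm, ENNReal.ofReal_coe_nnreal]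

end Aux2
section Aux3
set_option linter.unusedSectionVars false
open scoped NNReal

variable {q : ℕ} {T : Type} [DecidableEq T]

/-- The horocycle of a point. -/
def horoSet (S : HomTree q T) (t : T) : Set T := {r | S.horo r t}

/-- The fiber of a horocycle class. -/
def fiberSet (S : HomTree q T) (c : Quotient (horoSetoid S)) : Set T :=
  {r | Quotient.mk (horoSetoid S) r = c}

theorem horoSet_eq_fiber (S : HomTree q T) (t : T) :
    horoSet S t = fiberSet S (Quotient.mk (horoSetoid S) t) := by
  ext r
  exact ⟨fun h => Quotient.sound h, fun h => Quotient.exact h⟩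

/-- Candidate function for the horocycle-diagonal part. -/
def Yfun (S : HomTree q T) (X : L2 T →L[ℂ] L2 T) (f : L2 T) : T → ℂ :=
  fun t => X (maskL (horoSet S t) f) t

theorem mask_nnnorm_sq (S : HomTree q T) (c : Quotient (horoSetoid S)) (f : L2 T) :
    ((‖(maskL (fiberSet S c) f : L2 T)‖₊ : ℝ≥0∞)) ^ 2
      = ∑' (t : fiberSet S c), (‖f t.1‖₊ : ℝ≥0∞) ^ 2 := by
  rw [← norm_sq_tsum]
  rw [tsum_subtype (fiberSet S c) (fun t => (‖f t‖₊ : ℝ≥0∞) ^ 2)]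
  refine tsum_congr fun t => ?_
  rw [maskL_apply]
  by_cases h : t ∈ fiberSet S c
  · rw [Set.indicator_of_mem h, Set.indicator_of_mem h]
  · rw [Set.indicator_of_notMem h, Set.indicator_of_notMem h]; simp

theorem key_bound (S : HomTree q T) (X : L2 T →L[ℂ] L2 T) (f : L2 T) :
    ∑' t, (‖Yfun S X f t‖₊ : ℝ≥0∞) ^ 2 ≤ (‖X‖₊ : ℝ≥0∞) ^ 2 * (‖f‖₊ : ℝ≥0∞) ^ 2 := by
  classical
  set mk : T → Quotient (horoSetoid S) := Quotient.mk (horoSetoid S) with hmk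
  have reindex : ∀ (F : T → ℝ≥0∞), ∑' t, F t = ∑' c, ∑' (t : fiberSet S c), F t.1 := by
    intro F
    rw [← (Equiv.sigmaFiberEquiv mk).tsum_eq F, ENNReal.tsum_sigma']
    rfl
  rw [reindex]
  have step1 : ∀ c, (∑' (t : fiberSet S c), (‖Yfun S X f t.1‖₊ : ℝ≥0∞) ^ 2)
      ≤ (‖X‖₊ : ℝ≥0∞) ^ 2 * (‖(maskL (fiberSet S c) f : L2 T)‖₊ : ℝ≥0∞) ^ 2 := by
    intro c
    have heq : ∀ t : fiberSet S c, Yfun S X f t.1 = X (maskL (fiberSet S c) f) t.1 := by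
      rintro ⟨t, ht⟩
      simp only [Yfun]
      rw [horoSet_eq_fiber]
      exact congrFun (congrArg _ (congrArg _ (congrArg (fun A => maskL A f) (by rw [ht])))) t
    calc (∑' (t : fiberSet S c), (‖Yfun S X f t.1‖₊ : ℝ≥0∞) ^ 2)
        = ∑' (t : fiberSet S c), (‖X (maskL (fiberSet S c) f) t.1‖₊ : ℝ≥0∞) ^ 2 := by
          exact tsum_congr fun t => by rw [heq t]
      _ ≤ ∑' (t : T), (‖X (maskL (fiberSet S c) f) t‖₊ : ℝ≥0∞) ^ 2 :=
          ENNReal.tsum_comp_le_tsum_of_injective Subtype.val_injective _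
      _ = (‖X (maskL (fiberSet S c) f)‖₊ : ℝ≥0∞) ^ 2 := norm_sq_tsum _
      _ ≤ (‖X‖₊ : ℝ≥0∞) ^ 2 * (‖(maskL (fiberSet S c) f : L2 T)‖₊ : ℝ≥0∞) ^ 2 := by
          rw [← mul_pow, ← ENNReal.coe_mul]
          exact pow_le_pow_left' (ENNReal.coe_le_coe.2 (X.le_opNNNorm _)) 2
  calc (∑' c, ∑' (t : fiberSet S c), (‖Yfun S X f t.1‖₊ : ℝ≥0∞) ^ 2)
      ≤ ∑' c, (‖X‖₊ : ℝ≥0∞) ^ 2 * (‖(maskL (fiberSet S c) f : L2 T)‖₊ : ℝ≥0∞) ^ 2 :=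
        ENNReal.tsum_le_tsum step1
    _ = (‖X‖₊ : ℝ≥0∞) ^ 2 * ∑' c, (‖(maskL (fiberSet S c) f : L2 T)‖₊ : ℝ≥0∞) ^ 2 :=
        ENNReal.tsum_mul_left
    _ = (‖X‖₊ : ℝ≥0∞) ^ 2 * ∑' c, ∑' (t : fiberSet S c), (‖f t.1‖₊ : ℝ≥0∞) ^ 2 := by
        rw [tsum_congr fun c => mask_nnnorm_sq S c f]
    _ = (‖X‖₊ : ℝ≥0∞) ^ 2 * (‖f‖₊ : ℝ≥0∞) ^ 2 := by
        rw [← reindex (fun t => (‖f t‖₊ : ℝ≥0∞) ^ 2), norm_sq_tsum]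

end Aux3
section Aux4
set_option linter.unusedSectionVars false
open scoped NNReal

variable {q : ℕ} {T : Type} [DecidableEq T]

theorem Yfun_memℓp (S : HomTree q T) (X : L2 T →L[ℂ] L2 T) (f : L2 T) :
    Memℓp (Yfun S X f) 2 := by
  apply memℓp_gen
  have hfin : (∑' t, (‖Yfun S X f t‖₊ : ℝ≥0∞) ^ 2) ≠ ⊤ :=
    ((key_bound S X f).trans_lt (by exact ENNReal.mul_lt_top (by exact ENNReal.pow_lt_top ENNReal.coe_lt_top) (by exact ENNReal.pow_lt_top ENNReal.coe_lt_top))).ne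
  have h1 : ∑' t, ((‖Yfun S X f t‖₊ ^ 2 : ℝ≥0) : ℝ≥0∞) ≠ ⊤ := by
    simpa using hfin
  have h2 : Summable fun t => (‖Yfun S X f t‖₊ ^ 2 : ℝ≥0) :=
    ENNReal.tsum_coe_ne_top_iff_summable.1 h1
  have h3 : Summable fun t => ‖Yfun S X f t‖ ^ (2 : ℕ) := by
    have := NNReal.summable_coe.2 h2
    simpa using this
  convert h3 using 2 with t
  rw [ENNReal.toReal_ofNat, ← Real.rpow_natCast]
  norm_num

/-- The horocycle-diagonal part, as a linear map. -/
def Ylin (S : HomTree q T) (X : L2 T →L[ℂ] L2 T) : L2 T →ₗ[ℂ] L2 T where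
  toFun f := ⟨Yfun S X f, Yfun_memℓp S X f⟩
  map_add' f g := by
    ext t
    show Yfun S X (f + g) t = Yfun S X f t + Yfun S X g t
    simp only [Yfun, map_add, lp.coeFn_add, Pi.add_apply]
  map_smul' c f := by
    ext t
    show Yfun S X (c • f) t = c • Yfun S X f t
    simp only [Yfun, map_smul, lp.coeFn_smul, Pi.smul_apply, RingHom.id_apply]

theorem Ylin_norm_le (S : HomTree q T) (X : L2 T →L[ℂ] L2 T) (f : L2 T) :
    ‖Ylin S X f‖ ≤ ‖X‖ * ‖f‖ := by
  have h1 : (‖Ylin S X f‖₊ : ℝ≥0∞) ^ 2 ≤ (‖X‖₊ : ℝ≥0∞) ^ 2 * (‖f‖₊ : ℝ≥0∞) ^ 2 := by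
    rw [← norm_sq_tsum (Ylin S X f)]
    exact key_bound S X f
  rw [← mul_pow, ← ENNReal.coe_mul] at h1
  have h2 : ‖Ylin S X f‖₊ ≤ ‖X‖₊ * ‖f‖₊ := by
    have := ENNReal.coe_le_coe.1 (by exact_mod_cast h1 : ((‖Ylin S X f‖₊ ^ 2 : ℝ≥0) : ℝ≥0∞) ≤ ((‖X‖₊ * ‖f‖₊) ^ 2 : ℝ≥0))
    exact pow_le_pow_iff_left₀ (by positivity) (by positivity) (by norm_num) |>.1 this
  exact_mod_cast h2

/-- The horocycle-diagonal part, as a bounded operator. -/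
def Yop (S : HomTree q T) (X : L2 T →L[ℂ] L2 T) : L2 T →L[ℂ] L2 T :=
  LinearMap.mkContinuous (Ylin S X) ‖X‖ (Ylin_norm_le S X)

theorem Yop_norm_le (S : HomTree q T) (X : L2 T →L[ℂ] L2 T) : ‖Yop S X‖ ≤ ‖X‖ :=
  LinearMap.mkContinuous_norm_le _ (norm_nonneg X) _

theorem Yop_apply (S : HomTree q T) (X : L2 T →L[ℂ] L2 T) (f : L2 T) (t : T) :
    Yop S X f t = X (maskL (horoSet S t) f) t := rfl

end Aux4
section Aux5
set_option linter.unusedSectionVars false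

variable {q : ℕ} {T : Type} [DecidableEq T]

/-- Evaluation at a point, as a bounded functional on `ℓ²(T)`. -/
def evalCLM (t : T) : L2 T →L[ℂ] ℂ :=
  LinearMap.mkContinuous
    { toFun := fun f : L2 T => f t
      map_add' := fun f g => by
        show ((f + g : L2 T) : ∀ _, ℂ) t = _
        rw [lp.coeFn_add]; rfl
      map_smul' := fun c f => by
        show ((c • f : L2 T) : ∀ _, ℂ) t = _
        rw [lp.coeFn_smul]; rfl } 1
    (fun f => by
      simpa using lp.norm_apply_le_norm (by norm_num) f t)

theorem lp_single_zero (r : T) : lp.single (E := fun _ : T => ℂ) 2 r 0 = 0 := by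
  have h0 := lp.single_smul (E := fun _ : T => ℂ) 2 r (0 : ℂ) (0 : ℂ)
  rw [smul_zero, zero_smul] at h0
  exact h0

theorem lp_single_val (r : T) (c : ℂ) :
    lp.single (E := fun _ : T => ℂ) 2 r c = c • lp.single (E := fun _ : T => ℂ) 2 r 1 := by
  have h0 := lp.single_smul (E := fun _ : T => ℂ) 2 r c (1 : ℂ)
  rw [smul_eq_mul, mul_one] at h0
  exact h0

theorem mask_hasSum (A : Set T) (f : L2 T) :
    HasSum (fun r : A => f r.1 • lp.single 2 r.1 (1 : ℂ)) (maskL A f) := by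
  have h1 : HasSum (fun r : T => lp.single 2 r ((maskL A f : L2 T) r)) (maskL A f) :=
    lp.hasSum_single ENNReal.ofNat_ne_top _
  have hsupp : Function.support (fun r : T => lp.single 2 r ((maskL A f : L2 T) r)) ⊆ A := by
    refine Function.support_subset_iff'.2 fun r hrA => ?_
    simp only [maskL_apply, Set.indicator_of_notMem hrA]
    exact lp_single_zero r
  have h2 := (hasSum_subtype_iff_of_support_subset hsupp).2 h1
  refine h2.congr_fun fun r => ?_
  simp only [Function.comp_apply, maskL_apply, Set.indicator_of_mem r.2]
  exact (lp_single_val r.1 (f r.1)).symm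

theorem Yop_hasSum (S : HomTree q T) (X : L2 T →L[ℂ] L2 T) (f : L2 T) (t : T) :
    HasSum (fun r : {r : T // S.horo r t} =>
      X (lp.single 2 r.1 1) t * f r.1) (Yop S X f t) := by
  have h1 : HasSum (fun r : horoSet S t => f r.1 • lp.single 2 r.1 (1 : ℂ))
      (maskL (horoSet S t) f) := mask_hasSum _ f
  have h2 := h1.mapL (X : L2 T →L[ℂ] L2 T)
  have h3 := h2.mapL (evalCLM t)
  rw [Yop_apply]
  refine h3.congr_fun fun r => ?_
  show X (lp.single 2 r.1 1) t * f r.1 = evalCLM t (X (f r.1 • lp.single 2 r.1 (1 : ℂ)))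
  rw [map_smul, map_smul]
  show X (lp.single 2 r.1 1) t * f r.1 = (f r.1 • X (lp.single 2 r.1 (1 : ℂ))) t
  rw [lp.coeFn_smul, Pi.smul_apply, smul_eq_mul, mul_comm]

end Aux5
section Aux6
set_option linter.unusedSectionVars false
open scoped Classical

variable {q : ℕ} {T : Type} [DecidableEq T]

theorem Yop_causal (S : HomTree q T) (X : L2 T →L[ℂ] L2 T) : Causal S (Yop S X) := by
  intro s f hf t hts
  have h := Yop_hasSum S X f t
  have hz : (fun r : {r : T // S.horo r t} => X (lp.single 2 r.1 1) t * f r.1)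
      = fun _ => (0 : ℂ) := by
    funext r
    rw [hf r.1 (HomTree.horo_ple r.2 hts), mul_zero]
  rw [hz] at h
  exact h.unique hasSum_zero

theorem Yop_single (S : HomTree q T) (X : L2 T →L[ℂ] L2 T) (t r : T) :
    Yop S X (lp.single 2 t 1) r
      = if S.horo t r then X (lp.single 2 t 1) r else 0 := by
  have h := Yop_hasSum S X (lp.single 2 t 1) r
  by_cases ht : S.horo t r
  · have h2 : ∀ u : {u : T // S.horo u r}, u ≠ ⟨t, ht⟩ →
        X (lp.single 2 u.1 1) r * (lp.single 2 t 1 : L2 T) u.1 = 0 := by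
      rintro ⟨u, hu⟩ hne
      have hut : u ≠ t := fun he => hne (Subtype.ext he)
      rw [lp.single_apply_ne 2 t 1 hut, mul_zero]
    have h3 := hasSum_single (f := fun u : {u : T // S.horo u r} =>
      X (lp.single 2 u.1 1) r * (lp.single 2 t 1 : L2 T) u.1) ⟨t, ht⟩ h2
    have h4 := h3.unique h
    rw [if_pos ht, ← h4]
    show X (lp.single 2 t 1) r * (lp.single 2 t 1 : L2 T) t = _
    rw [lp.single_apply_self, mul_one]
  · rw [if_neg ht]
    have hz : (fun u : {u : T // S.horo u r} =>
        X (lp.single 2 u.1 1) r * (lp.single 2 t 1 : L2 T) u.1) = fun _ => (0 : ℂ) := by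
      funext u
      have hut : u.1 ≠ t := fun he => ht (he ▸ u.2)
      rw [lp.single_apply_ne 2 t 1 hut, mul_zero]
    rw [hz] at h
    exact h.unique hasSum_zero

theorem Yop_adjoint_causal (S : HomTree q T) (X : L2 T →L[ℂ] L2 T) :
    Causal S (adjoint (Yop S X)) := by
  intro s f hf t hts
  have h1 : adjoint (Yop S X) f t = ⟪lp.single 2 t (1 : ℂ), adjoint (Yop S X) f⟫_ℂ := by
    rw [lp.inner_single_left]
    simp
  rw [h1, ContinuousLinearMap.adjoint_inner_right, lp.inner_eq_tsum]
  have hz : ∀ r : T, ⟪Yop S X (lp.single 2 t 1) r, f r⟫_ℂ = 0 := by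
    intro r
    rw [Yop_single]
    by_cases hr : S.horo t r
    · rw [if_pos hr]
      have hfr : f r = 0 := hf r (HomTree.horo_ple (HomTree.horo_symm hr) hts)
      simp [hfr]
    · rw [if_neg hr]
      simp
  rw [tsum_congr hz, tsum_zero]

end Aux6

/-- For a bounded operator `X` on `ℓ²(T)`, its horocycle-diagonal
part `X_[∅]`, defined by `(X_[∅] f)(t) = Σ_{r ≍ t} (Xχ_r)(t)·f(r)`, is a
bounded operator, satisfies `‖X_[∅]‖ ≤ ‖X‖`, and is a constant. -/
theorem horocycle_diagonal_part {q : ℕ} (hq : 1 ≤ q) {T : Type} [DecidableEq T]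
    (S : HomTree q T) (X : L2 T →L[ℂ] L2 T) :
    ∃ Y : L2 T →L[ℂ] L2 T,
      (∀ (f : L2 T) (t : T),
        HasSum (fun r : {r : T // S.horo r t} =>
          X (lp.single 2 r.1 1) t * f r.1) (Y f t)) ∧
      ‖Y‖ ≤ ‖X‖ ∧ IsConst S Y := by
  exact ⟨Yop S X, Yop_hasSum S X, Yop_norm_le S X, Yop_causal S X, Yop_adjoint_causal S X⟩
end Multiscale
end
end

section
/- Let c ∈ B(T) (i.e., a q-tuple of constants with spectral radius condition lim ‖(cα)^n‖^{1/n} < 1, where α is the column of primitive shifts). Then I − α*c* is invertible in the algebra of causal bounded operators, with inverse K_∧^c = Σ_{n≥0} (α*c*)^n (norm-absolutely convergent), and for every causal Hilbert–Schmidt F and every Hilbert–Schmidt constant k, ⟨F^∧(c), k⟩_2 = ⟨F, K_∧^c k⟩_2. -/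
open scoped InnerProductSpace ENNReal
open ContinuousLinearMap (adjoint)

noncomputable section

namespace Multiscale

variable {q : ℕ} {T : Type} [DecidableEq T]

-- ===== auxiliary tree lemmas =====
namespace HomTree

variable (S : HomTree q T)

lemma iter_iter (a b : ℕ) (x : T) :
    S.parent^[a] (S.parent^[b] x) = S.parent^[a + b] x :=
  (Function.iterate_add_apply _ a b x).symm

lemma ple_refl (t : T) : S.ple t t := ⟨0, 0, le_refl _, rfl⟩

lemma ple_trans {a b c : T} (h1 : S.ple a b) (h2 : S.ple b c) : S.ple a c := by
  obtain ⟨m, n, hmn, h1⟩ := h1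
  obtain ⟨m', n', hmn', h2⟩ := h2
  refine ⟨m' + m, n' + n, by omega, ?_⟩
  rw [← iter_iter, h1, iter_iter, Nat.add_comm m' n, ← iter_iter, h2, iter_iter,
    Nat.add_comm n n']

lemma parent_iterate_inj {m d : ℕ} {x : T} (h : S.parent^[m + d] x = S.parent^[m] x) :
    d = 0 := by
  apply S.acyclic (S.parent^[m] x) d
  rw [iter_iter, Nat.add_comm d m, h]

lemma horo_refl_s14 (t : T) : S.horo t t := ⟨0, rfl⟩

lemma horo_symm_s14 {a b : T} (h : S.horo a b) : S.horo b a := by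
  obtain ⟨n, h⟩ := h; exact ⟨n, h.symm⟩

lemma horo_mono {a b : T} {m m' : ℕ} (h : S.parent^[m] a = S.parent^[m] b)
    (hm : m ≤ m') : S.parent^[m'] a = S.parent^[m'] b := by
  have : m' = (m' - m) + m := by omega
  rw [this, ← iter_iter, ← iter_iter, h]

lemma horo_trans_s14 {a b c : T} (h1 : S.horo a b) (h2 : S.horo b c) : S.horo a c := by
  obtain ⟨m, h1⟩ := h1
  obtain ⟨n, h2⟩ := h2
  exact ⟨max m n, (S.horo_mono h1 (le_max_left _ _)).trans
    (S.horo_mono h2 (le_max_right _ _))⟩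

lemma horo_parent_iter {a b : T} (h : S.horo a b) (d : ℕ) :
    S.horo (S.parent^[d] a) (S.parent^[d] b) := by
  obtain ⟨m, h⟩ := h
  exact ⟨m, by rw [iter_iter, iter_iter]; exact S.horo_mono h (by omega)⟩

lemma horo_iterate_self {t : T} {d : ℕ} (h : S.horo t (S.parent^[d] t)) : d = 0 := by
  obtain ⟨m, h⟩ := h
  rw [iter_iter] at h
  exact S.parent_iterate_inj h.symm

lemma ple_antisymm {s t : T} (h1 : S.ple s t) (h2 : S.ple t s) : S.horo s t := by
  obtain ⟨m, n, hmn, h1⟩ := h1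
  obtain ⟨a, b, hab, h2⟩ := h2
  have key : S.parent^[a + m] s = S.parent^[n + b] s := by
    rw [← iter_iter, h1, iter_iter, Nat.add_comm a n, ← iter_iter, h2, iter_iter]
  have hd : (n + b) - (a + m) = 0 := by
    apply S.parent_iterate_inj (m := a + m) (x := s)
    have he : a + m + (n + b - (a + m)) = n + b := by omega
    rw [he]; exact key.symm
  have hmn2 : m = n := by omega
  exact ⟨n, by rw [← hmn2] at h1 ⊢; exact h1⟩

lemma horo_of_parent {a b a' b' : T} (ha : S.parent a = a') (hb : S.parent b = b')
    (h : S.horo a' b') : S.horo a b := by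
  obtain ⟨m, h⟩ := h
  refine ⟨m + 1, ?_⟩
  rw [← iter_iter, ← iter_iter]
  simp only [Function.iterate_one, ha, hb, h]

lemma parent_iterate_shift (j : Fin q) (n : ℕ) (t : T) :
    S.parent^[n] ((S.shift j)^[n] t) = t := by
  induction n generalizing t with
  | zero => rfl
  | succ n ih =>
    rw [Function.iterate_succ_apply' (S.shift j), Function.iterate_succ_apply,
      S.parent_shift, ih]

lemma parent_iterate_shift_le (j : Fin q) {a n : ℕ} (h : a ≤ n) (t : T) :
    S.parent^[a] ((S.shift j)^[n] t) = (S.shift j)^[n - a] t := by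
  have h1 : (S.shift j)^[n] t = (S.shift j)^[a] ((S.shift j)^[n - a] t) := by
    rw [← Function.iterate_add_apply]; congr 1; omega
  rw [h1, parent_iterate_shift]

lemma horo_shift_self {t : T} {j : Fin q} {d : ℕ} (h : S.horo t ((S.shift j)^[d] t)) :
    d = 0 := by
  obtain ⟨m, h⟩ := h
  have h2 : S.parent^[m + d] t = S.parent^[m + d] ((S.shift j)^[d] t) :=
    S.horo_mono h (by omega)
  have key : S.parent^[m + d] ((S.shift j)^[d] t) = S.parent^[m] t := by
    rw [← iter_iter, S.parent_iterate_shift]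
  exact S.parent_iterate_inj (h2.trans key)

lemma parent_iterate_act (w : List (Fin q)) (r : T) :
    S.parent^[w.length] (S.act w r) = r := by
  induction w generalizing r with
  | nil => rfl
  | cons i w ih =>
    show S.parent^[w.length + 1] (S.act w (S.shift i r)) = r
    rw [Function.iterate_succ_apply', ih, S.parent_shift]

lemma ple_of_shift {j : Fin q} {r s : T} (h : S.shift j r = s) : S.ple r s :=
  ⟨0, 1, by omega, by simp [← h, S.parent_shift]⟩

end HomTree

-- ===== auxiliary operator lemmas =====
section OpAux

variable (S : HomTree q T)

lemma inner_single_eq_apply (s : T) (f : L2 T) :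
    ⟪(lp.single 2 s 1 : L2 T), f⟫_ℂ = f s := by
  rw [lp.inner_single_left]
  simp

lemma causal_apply_single_ne {X : L2 T →L[ℂ] L2 T} (hX : Causal S X) {t s : T}
    (h : X (lp.single 2 t 1) s ≠ 0) : S.ple t s := by
  by_contra hts
  refine h (hX s (lp.single 2 t 1) (fun u hu => ?_) s (S.ple_refl s))
  rcases eq_or_ne u t with rfl | hne
  · exact absurd hu hts
  · exact lp.single_apply_ne _ _ _ hne

lemma adjoint_apply_single (X : L2 T →L[ℂ] L2 T) (t s : T) :
    adjoint X (lp.single 2 t 1) s = starRingEnd ℂ (X (lp.single 2 s 1) t) := by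
  rw [← inner_single_eq_apply, ContinuousLinearMap.adjoint_inner_right,
    lp.inner_single_right]
  simp [RCLike.inner_apply]

lemma const_single_horo {X : L2 T →L[ℂ] L2 T} (hX : IsConst S X) {t s : T}
    (h : X (lp.single 2 t 1) s ≠ 0) : S.horo s t := by
  have h1 : S.ple t s := causal_apply_single_ne S hX.1 h
  have h2 : S.ple s t := by
    refine causal_apply_single_ne S hX.2 (t := s) (s := t) ?_
    rw [adjoint_apply_single]
    simpa using h
  exact S.horo_symm_s14 (S.ple_antisymm h1 h2)

lemma zero_of_terms_zero {ι : Type*} {f : ι → ℂ} {a : ℂ} (h : HasSum f a)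
    (hz : ∀ i, f i = 0) : a = 0 :=
  h.unique (by simpa [funext hz] using hasSum_zero)

/-- If `c` is a constant and `f` is supported in the horocycle of `u`,
then `c f` is supported in the horocycle of `u`. -/
lemma const_support {X : L2 T →L[ℂ] L2 T} (hX : IsConst S X) {u : T} {f : L2 T}
    (hf : ∀ p, f p ≠ 0 → S.horo p u) {s : T} (h : X f s ≠ 0) : S.horo s u := by
  by_contra hs
  apply h
  have hexp : HasSum (fun r : T => lp.single 2 r (f r)) f :=
    lp.hasSum_single ENNReal.ofNat_ne_top f
  have hX1 : HasSum (fun r : T => X (lp.single 2 r (f r))) (X f) :=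
    hexp.mapL X
  have hEval : HasSum (fun r : T => X (lp.single 2 r (f r)) s) (X f s) := by
    have := hX1.mapL (innerSL ℂ (lp.single 2 s 1 : L2 T))
    simpa only [innerSL_apply_apply, inner_single_eq_apply] using this
  refine zero_of_terms_zero hEval (fun r => ?_)
  have hsingle : (lp.single 2 r (f r) : L2 T) = f r • lp.single 2 r 1 := by
    rw [← lp.single_smul]
    norm_num
  rw [hsingle, map_smul]
  rcases eq_or_ne (f r) 0 with hfr | hfr
  · simp [hfr]
  rcases eq_or_ne (X (lp.single 2 r 1) s) 0 with hXr | hXr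
  · simp only [lp.coeFn_smul, Pi.smul_apply, hXr, smul_zero]
  exact absurd (S.horo_trans_s14 (const_single_horo S hX hXr) (hf r hfr)) hs

end OpAux

section OpAux2

variable (S : HomTree q T)

lemma adjoint_shift_support (A : Fin q → (L2 T →L[ℂ] L2 T))
    (hA : ∀ (j : Fin q) (f : L2 T) (t : T), A j f t = f (S.shift j t))
    (j : Fin q) (g : L2 T) (s : T) (h : adjoint (A j) g s ≠ 0) :
    ∃ r, S.shift j r = s ∧ g r ≠ 0 := by
  by_contra hcon
  push_neg at hcon
  apply h
  rw [← inner_single_eq_apply, ContinuousLinearMap.adjoint_inner_right,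
    lp.inner_eq_tsum]
  refine zero_of_terms_zero (Summable.hasSum ?_) (fun u => ?_)
  · exact (lp.summable_inner _ _)
  · rw [hA]
    rcases eq_or_ne (S.shift j u) s with he | hne
    · rw [hcon u he]
      simp
    · rw [lp.single_apply_ne _ _ _ hne]
      simp

lemma adjoint_wordOp_support (A : Fin q → (L2 T →L[ℂ] L2 T))
    (hA : ∀ (j : Fin q) (f : L2 T) (t : T), A j f t = f (S.shift j t))
    (w : List (Fin q)) (g : L2 T) (s : T) (h : adjoint (wordOp A w) g s ≠ 0) :
    ∃ r, S.act w r = s ∧ g r ≠ 0 := by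
  induction w generalizing g with
  | nil =>
    refine ⟨s, rfl, ?_⟩
    have h1 : (wordOp A ([] : List (Fin q))) = 1 := rfl
    rw [h1, ← ContinuousLinearMap.star_eq_adjoint, star_one] at h
    simpa using h
  | cons i w ih =>
    have h1 : wordOp A (i :: w) = A i ∘L wordOp A w := rfl
    rw [h1, ContinuousLinearMap.adjoint_comp] at h
    obtain ⟨r', hr', hg'⟩ := ih (adjoint (A i) g) h
    obtain ⟨r, hr, hg⟩ := adjoint_shift_support S A hA i g r' hg'
    exact ⟨r, by rw [show S.act (i :: w) r = S.act w (S.shift i r) from rfl, hr, hr'], hg⟩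

lemma causal_comp {X Y : L2 T →L[ℂ] L2 T} (hX : Causal S X) (hY : Causal S Y) :
    Causal S (X ∘L Y) := by
  intro s f hf t ht
  exact hX s (Y f) (fun u hu => hY s f hf u hu) t ht

lemma causal_add {X Y : L2 T →L[ℂ] L2 T} (hX : Causal S X) (hY : Causal S Y) :
    Causal S (X + Y) := by
  intro s f hf t ht
  have : (X + Y) f = X f + Y f := rfl
  rw [this, lp.coeFn_add, Pi.add_apply, hX s f hf t ht, hY s f hf t ht, add_zero]

lemma causal_zero : Causal S (0 : L2 T →L[ℂ] L2 T) := by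
  intro s f hf t ht
  rfl

lemma causal_one : Causal S (1 : L2 T →L[ℂ] L2 T) := by
  intro s f hf t ht
  exact hf t ht

lemma causal_sum {ι : Type*} (G : Finset ι) (X : ι → (L2 T →L[ℂ] L2 T))
    (hX : ∀ i ∈ G, Causal S (X i)) : Causal S (∑ i ∈ G, X i) :=
  Finset.sum_induction X (Causal S) (fun _ _ ha hb => causal_add S ha hb)
    (causal_zero S) hX

lemma causal_adjoint_shift {S : HomTree q T} (A : Fin q → (L2 T →L[ℂ] L2 T))
    (hA : ∀ (j : Fin q) (f : L2 T) (t : T), A j f t = f (S.shift j t))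
    (j : Fin q) : Causal S (adjoint (A j)) := by
  intro s f hf t ht
  by_contra h
  obtain ⟨r, hr, hg⟩ := adjoint_shift_support S A hA j f t h
  exact hg (hf r (S.ple_trans (S.ple_of_shift hr) ht))

lemma causal_pow {X : L2 T →L[ℂ] L2 T} (hX : Causal S X) (n : ℕ) :
    Causal S (X ^ n) := by
  induction n with
  | zero => exact causal_one S
  | succ n ih =>
    rw [pow_succ, ContinuousLinearMap.mul_def]
    exact causal_comp S ih hX

lemma causal_hasSum {X : ℕ → (L2 T →L[ℂ] L2 T)} {K : L2 T →L[ℂ] L2 T}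
    (hX : ∀ n, Causal S (X n)) (hK : HasSum X K) : Causal S K := by
  intro s f hf t ht
  have h1 : HasSum (fun n => X n f) (K f) :=
    hK.mapL (ContinuousLinearMap.apply ℂ (L2 T) f)
  have h2 : HasSum (fun n => X n f t) (K f t) := by
    have := h1.mapL (innerSL ℂ (lp.single 2 t 1 : L2 T))
    simpa only [innerSL_apply_apply, inner_single_eq_apply] using this
  exact zero_of_terms_zero h2 (fun n => hX n s f hf t ht)

lemma lp_sum_apply {ι : Type*} (G : Finset ι) (g : ι → L2 T) (s : T) :
    (∑ i ∈ G, g i) s = ∑ i ∈ G, g i s := by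
  have h := map_sum (innerSL ℂ (lp.single 2 s 1 : L2 T)) g G
  simpa only [innerSL_apply_apply, inner_single_eq_apply] using h

end OpAux2

section Neumann

lemma summable_norm_pow {A : Type*} [NormedRing A] [NormedAlgebra ℂ A] [CompleteSpace A]
    (M : A) (h : spectralRadius ℂ M < 1) : Summable fun n : ℕ => ‖M ^ n‖ := by
  obtain ⟨r, hr1, hr2⟩ := ENNReal.lt_iff_exists_nnreal_btwn.mp h
  have hg := spectrum.pow_nnnorm_pow_one_div_tendsto_nhds_spectralRadius M
  have hev : ∀ᶠ n : ℕ in Filter.atTop, (‖M ^ n‖₊ : ℝ≥0∞) ^ (1 / (n : ℝ)) < (r : ℝ≥0∞) :=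
    hg.eventually_lt_const hr1
  have hr2' : (r : ℝ) < 1 := by
    have := ENNReal.coe_lt_coe.mp (by simpa using hr2)
    exact_mod_cast this
  have key : ∀ᶠ n : ℕ in Filter.atTop, ‖M ^ n‖ ≤ (r : ℝ) ^ n := by
    filter_upwards [hev, Filter.eventually_ge_atTop 1] with n hn hn1
    have hne : (n : ℝ) ≠ 0 := by
      simp only [ne_eq, Nat.cast_eq_zero]; omega
    have h1 : ((‖M ^ n‖₊ : ℝ≥0∞) ^ (1 / (n : ℝ))) ^ (n : ℝ) ≤ (r : ℝ≥0∞) ^ (n : ℝ) :=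
      ENNReal.rpow_le_rpow hn.le (by positivity)
    rw [← ENNReal.rpow_mul, one_div, inv_mul_cancel₀ hne, ENNReal.rpow_one,
      ENNReal.rpow_natCast, ← ENNReal.coe_pow, ENNReal.coe_le_coe] at h1
    have h2 := NNReal.coe_le_coe.mpr h1
    rwa [coe_nnnorm, NNReal.coe_pow] at h2
  refine Summable.of_norm_bounded_eventually
    (summable_geometric_of_lt_one r.coe_nonneg hr2') ?_
  rw [Nat.cofinite_eq_atTop]
  filter_upwards [key] with n hn
  rwa [norm_norm]

end Neumann

set_option maxHeartbeats 1000000 in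
/-- For `c ∈ B(T)` (a `q`-tuple of constants with
`lim ‖(cα)ⁿ‖^{1/n} < 1`), the operator `I − α*c*` is invertible in the algebra
of causal bounded operators, with inverse `K_∧^c = Σ_{n≥0} (α*c*)ⁿ`
(norm-absolutely convergent), and Cauchy's formula
`⟨F^∧(c), k⟩₂ = ⟨F, K_∧^c k⟩₂` holds for every causal Hilbert--Schmidt `F`
and Hilbert--Schmidt constant `k`.  Here `cα = Σⱼ cⱼαⱼ`, so `α*c* = (cα)*`,
and `F^∧(c) = Σ_n (cα)ⁿ (Σ_{|w|=n} w* F_[w])` is the point evaluation of `F`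
built from its power series coefficients `F_[w]`. -/
theorem cauchy_formula {q : ℕ} (hq : 1 ≤ q) {T : Type} [DecidableEq T]
    (S : HomTree q T) (A : Fin q → (L2 T →L[ℂ] L2 T))
    (hA : ∀ (j : Fin q) (f : L2 T) (t : T), A j f t = f (S.shift j t))
    (c : Fin q → (L2 T →L[ℂ] L2 T)) (hc : ∀ j, IsConst S (c j))
    (hrad : spectralRadius ℂ (∑ j, c j ∘L A j) < 1) :
    ∃ K : L2 T →L[ℂ] L2 T,
      Summable (fun n : ℕ => ‖(adjoint (∑ j, c j ∘L A j)) ^ n‖) ∧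
      HasSum (fun n : ℕ => (adjoint (∑ j, c j ∘L A j)) ^ n) K ∧
      Causal S K ∧
      (1 - adjoint (∑ j, c j ∘L A j)) ∘L K = 1 ∧
      K ∘L (1 - adjoint (∑ j, c j ∘L A j)) = 1 ∧
      (∀ (F : L2 T →L[ℂ] L2 T) (Fc : List (Fin q) → (L2 T →L[ℂ] L2 T))
          (E : L2 T →L[ℂ] L2 T),
        Causal S F → HSSummable F →
        (∀ w, IsConst S (Fc w)) →
        (∀ (f : L2 T) (t : T),
          Summable fun w : List (Fin q) => ‖adjoint (wordOp A w) (Fc w f) t‖) →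
        (∀ (f : L2 T) (t : T),
          HasSum (fun w : List (Fin q) => adjoint (wordOp A w) (Fc w f) t)
            (F f t)) →
        HasSum (fun n : ℕ => ((∑ j, c j ∘L A j) ^ n) ∘L
          (∑ w : List.Vector (Fin q) n,
            adjoint (wordOp A w.1) ∘L Fc w.1)) E →
        ∀ k : L2 T →L[ℂ] L2 T, IsConst S k → HSSummable k →
          hsInner E k = hsInner F (K ∘L k)) := by
  classical
  set M : L2 T →L[ℂ] L2 T := ∑ j, c j ∘L A j with hM
  set x : L2 T →L[ℂ] L2 T := adjoint M with hxdef
  have hxpow : ∀ n : ℕ, x ^ n = adjoint (M ^ n) := by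
    intro n
    rw [hxdef, ← ContinuousLinearMap.star_eq_adjoint, ← ContinuousLinearMap.star_eq_adjoint,
      ← star_pow]
  have hnormsum : Summable fun n : ℕ => ‖x ^ n‖ := by
    have h1 : ∀ n : ℕ, ‖x ^ n‖ = ‖M ^ n‖ := by
      intro n
      rw [hxpow n, ← ContinuousLinearMap.star_eq_adjoint]
      exact norm_star (M ^ n)
    simpa only [h1] using summable_norm_pow M hrad
  have hsummable : Summable fun n : ℕ => x ^ n := hnormsum.of_norm
  set K : L2 T →L[ℂ] L2 T := ∑' n : ℕ, x ^ n with hKdef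
  have hK : HasSum (fun n : ℕ => x ^ n) K := hsummable.hasSum
  -- causality
  have hMadj : x = ∑ j, adjoint (A j) ∘L adjoint (c j) := by
    rw [hxdef, hM, ← ContinuousLinearMap.star_eq_adjoint, star_sum]
    refine Finset.sum_congr rfl (fun j _ => ?_)
    rw [ContinuousLinearMap.star_eq_adjoint, ContinuousLinearMap.adjoint_comp]
  have hcx : Causal S x := by
    rw [hMadj]
    exact causal_sum S _ _ (fun j _ =>
      causal_comp S (causal_adjoint_shift A hA j) (hc j).2)
  have hcK : Causal S K := causal_hasSum S (fun n => causal_pow S hcx n) hK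
  -- Neumann inverse
  have hshift : HasSum (fun n : ℕ => x ^ (n + 1)) (K - 1) := by
    refine (hasSum_nat_add_iff 1).mpr ?_
    simpa using hK
  have hxK : x * K = K - 1 := by
    refine HasSum.unique ?_ hshift
    have := hK.mul_left x
    simpa only [← pow_succ'] using this
  have hKx : K * x = K - 1 := by
    refine HasSum.unique ?_ hshift
    have := hK.mul_right x
    simpa only [← pow_succ] using this
  have hleft : (1 - x) ∘L K = 1 := by
    rw [← ContinuousLinearMap.mul_def, sub_mul, one_mul, hxK, sub_sub_cancel]
  have hright : K ∘L (1 - x) = 1 := by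
    rw [← ContinuousLinearMap.mul_def, mul_sub, mul_one, hKx, sub_sub_cancel]
  refine ⟨K, hnormsum, hK, hcK, hleft, hright, ?_⟩
  -- ===== Cauchy formula =====
  intro F Fc E hF hFHS hFc habs hsum hE k hk hkHS
  set j₀ : Fin q := ⟨0, hq⟩ with hj₀
  -- support propagation through x = adjoint M
  have hxsupp : ∀ (u : T) (f : L2 T), (∀ p, f p ≠ 0 → S.horo p u) →
      ∀ s, x f s ≠ 0 → S.horo s (S.shift j₀ u) := by
    intro u f hf s hs
    rw [hMadj] at hs
    rw [ContinuousLinearMap.sum_apply, lp_sum_apply] at hs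
    obtain ⟨j, -, hj⟩ := Finset.exists_ne_zero_of_sum_ne_zero hs
    rw [ContinuousLinearMap.comp_apply] at hj
    obtain ⟨r, hr, hg⟩ := adjoint_shift_support S A hA j (adjoint (c j) f) s hj
    have hconst : IsConst S (adjoint (c j)) := by
      refine ⟨(hc j).2, ?_⟩
      rw [ContinuousLinearMap.adjoint_adjoint]
      exact (hc j).1
    have hru : S.horo r u := const_support S hconst hf hg
    refine S.horo_of_parent (a' := r) (b' := u) ?_ (S.parent_shift j₀ u) hru
    rw [← hr, S.parent_shift]
  unfold hsInner
  refine tsum_congr (fun t => ?_)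
  have hysupp : ∀ (n : ℕ) (s : T), (x ^ n) (k (lp.single 2 t 1)) s ≠ 0 →
      S.horo s ((S.shift j₀)^[n] t) := by
    intro n
    induction n with
    | zero =>
      intro s hs
      rw [pow_zero, ContinuousLinearMap.one_apply] at hs
      rw [Function.iterate_zero_apply]
      exact const_single_horo S hk hs
    | succ n ih =>
      intro s hs
      rw [pow_succ', ContinuousLinearMap.mul_apply] at hs
      rw [Function.iterate_succ_apply']
      exact hxsupp _ _ ih s hs
  have key : ∀ n : ℕ,
      ⟪k (lp.single 2 t 1), (((M ^ n) ∘L (∑ w : List.Vector (Fin q) n,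
          adjoint (wordOp A w.1) ∘L Fc w.1)) (lp.single 2 t 1))⟫_ℂ
        = ⟪(x ^ n) (k (lp.single 2 t 1)), F (lp.single 2 t 1)⟫_ℂ := by
    intro n
    rw [ContinuousLinearMap.comp_apply,
      ← ContinuousLinearMap.adjoint_inner_left (M ^ n), ← hxpow n,
      lp.inner_eq_tsum, lp.inner_eq_tsum]
    refine tsum_congr (fun s => ?_)
    rcases eq_or_ne ((x ^ n) (k (lp.single 2 t 1)) s) 0 with hy0 | hy0
    · rw [hy0]
      simp
    · congr 1
      have hhoro := hysupp n s hy0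
      have hFs : HasSum
          (fun w : List (Fin q) => adjoint (wordOp A w) (Fc w (lp.single 2 t 1)) s)
          (F (lp.single 2 t 1) s) := hsum (lp.single 2 t 1) s
      have hvanish : ∀ w : List (Fin q), w.length ≠ n →
          adjoint (wordOp A w) (Fc w (lp.single 2 t 1)) s = 0 := by
        intro w hw
        by_contra hne
        obtain ⟨r, hr, hgr⟩ :=
          adjoint_wordOp_support S A hA w (Fc w (lp.single 2 t 1)) s hne
        have hrt : S.horo r t := const_single_horo S (hFc w) hgr
        have h1 : S.horo (S.parent^[w.length] s)
            (S.parent^[w.length] ((S.shift j₀)^[n] t)) := S.horo_parent_iter hhoro _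
        rw [← hr, S.parent_iterate_act] at h1
        rcases le_or_gt w.length n with hle | hlt
        · rw [S.parent_iterate_shift_le j₀ hle] at h1
          have hz : n - w.length = 0 :=
            S.horo_shift_self (S.horo_trans_s14 (S.horo_symm_s14 hrt) h1)
          omega
        · have hdecomp : S.parent^[w.length] ((S.shift j₀)^[n] t)
              = S.parent^[w.length - n] t := by
            have he : w.length = (w.length - n) + n := by omega
            rw [he, ← S.iter_iter, S.parent_iterate_shift]
            simp
          rw [hdecomp] at h1
          have hz : w.length - n = 0 :=
            S.horo_iterate_self (S.horo_trans_s14 (S.horo_symm_s14 hrt) h1)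
          omega
      have hFset : F (lp.single 2 t 1) s
          = ∑ v : List.Vector (Fin q) n,
              adjoint (wordOp A v.1) (Fc v.1 (lp.single 2 t 1)) s := by
        rw [← hFs.tsum_eq]
        rw [tsum_eq_sum
          (s := (Finset.univ : Finset (List.Vector (Fin q) n)).image
            (fun v => v.1)) ?_]
        · rw [Finset.sum_image ?_]
          intro v _ v' _ hvv
          exact Subtype.ext hvv
        · intro w hw
          refine hvanish w (fun hlen => hw ?_)
          exact Finset.mem_image.mpr ⟨⟨w, hlen⟩, Finset.mem_univ _, rfl⟩
      have hGs : (∑ v : List.Vector (Fin q) n,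
            adjoint (wordOp A v.1) ∘L Fc v.1) (lp.single 2 t 1) s
          = ∑ v : List.Vector (Fin q) n,
              adjoint (wordOp A v.1) (Fc v.1 (lp.single 2 t 1)) s := by
        rw [ContinuousLinearMap.sum_apply, lp_sum_apply]
        rfl
      rw [hGs, hFset]
  have hEsum : HasSum (fun n : ℕ =>
      ⟪k (lp.single 2 t 1), (((M ^ n) ∘L (∑ w : List.Vector (Fin q) n,
          adjoint (wordOp A w.1) ∘L Fc w.1)) (lp.single 2 t 1))⟫_ℂ)
      ⟪k (lp.single 2 t 1), E (lp.single 2 t 1)⟫_ℂ := by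
    have h1 := hE.mapL (ContinuousLinearMap.apply ℂ (L2 T) (lp.single 2 t 1))
    have h2 := h1.mapL (innerSL ℂ (k (lp.single 2 t 1)))
    simpa [innerSL_apply_apply] using h2
  have hKsum : HasSum (fun n : ℕ =>
      ⟪(x ^ n) (k (lp.single 2 t 1)), F (lp.single 2 t 1)⟫_ℂ)
      ⟪(K ∘L k) (lp.single 2 t 1), F (lp.single 2 t 1)⟫_ℂ := by
    have h1 := hK.mapL (ContinuousLinearMap.apply ℂ (L2 T) (k (lp.single 2 t 1)))
    have h2 := h1.mapL (innerSL ℂ (F (lp.single 2 t 1)))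
    have h3 := h2.map (starAddEquiv : ℂ ≃+ ℂ).toAddMonoidHom continuous_star
    simp only [Function.comp_def, AddEquiv.toAddMonoidHom_eq_coe,
      AddMonoidHom.coe_coe, starAddEquiv_apply, innerSL_apply_apply,
      ContinuousLinearMap.apply_apply] at h3
    simp only [ContinuousLinearMap.comp_apply]
    convert h3 using 2 with n
    · exact (inner_conj_symm _ _).symm
    · exact (inner_conj_symm _ _).symm
  rw [funext key] at hEsum
  exact hEsum.unique hKsum
end Multiscale
end
end
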